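/- Let A ∈ ℂ^{n×n} with minimal polynomial m of degree l, and let u, v ∈ ℂ^n be such that the polynomial p_{uv}(λ) = m(λ)·vᵀ(λ I - A)⁻¹u has degree l - 1 and no common root with m. Then for every τ ∈ ℂ \ {0}, the matrix A + τ u vᵀ has exactly l eigenvalues, counted with algebraic multiplicity, that are not eigenvalues of A; these are precisely the roots of m(λ) - τ p_{uv}(λ). -/

import Mathlib

open Matrix Polynomial Classical

lemma my_eval_charpoly {n : ℕ} (M : Matrix (Fin n) (Fin n) ℂ) (z : ℂ) :
    M.charpoly.eval z = (z • (1 : Matrix (Fin n) (Fin n) ℂ) - M).det := by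
  rw [Matrix.charpoly, _root_.eval_det, matPolyEquiv_charmatrix]
  simp [smul_one_eq_diagonal, scalar_apply]

lemma my_spec_iff_charpoly {n : ℕ} (M : Matrix (Fin n) (Fin n) ℂ) (z : ℂ) :
    z ∈ spectrum ℂ M ↔ M.charpoly.IsRoot z := by
  rw [spectrum.mem_iff, Algebra.algebraMap_eq_smul_one, IsRoot, my_eval_charpoly,
    Matrix.isUnit_iff_isUnit_det, isUnit_iff_ne_zero, not_not]

lemma my_spec_iff_minpoly {n : ℕ} (M : Matrix (Fin n) (Fin n) ℂ) (z : ℂ) :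
    z ∈ spectrum ℂ M ↔ (minpoly ℂ M).IsRoot z := by
  let e := Matrix.toLinAlgEquiv (Pi.basisFun ℂ (Fin n))
  rw [← AlgEquiv.spectrum_eq e M, ← minpoly.algEquiv_eq e M,
    ← Module.End.hasEigenvalue_iff_mem_spectrum,
    Module.End.hasEigenvalue_iff_isRoot]

lemma my_det_step {n : ℕ} (A : Matrix (Fin n) (Fin n) ℂ) (u v : Fin n → ℂ) (τ z : ℂ)
    (hz : z ∉ spectrum ℂ A) :
    (A + τ • Matrix.vecMulVec u v).charpoly.eval z =
      A.charpoly.eval z *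
        (1 - τ * (v ⬝ᵥ ((z • (1 : Matrix (Fin n) (Fin n) ℂ) - A)⁻¹ *ᵥ u))) := by
  set M := z • (1 : Matrix (Fin n) (Fin n) ℂ) - A with hM
  have hdet : IsUnit M.det := by
    rw [isUnit_iff_ne_zero, ← my_eval_charpoly]
    exact fun h => hz ((my_spec_iff_charpoly A z).2 h)
  have hsplit : z • (1 : Matrix (Fin n) (Fin n) ℂ) - (A + τ • Matrix.vecMulVec u v) =
      M + replicateCol Unit (-(τ • u)) * replicateRow Unit v := by
    ext i j
    simp [hM, Matrix.mul_apply, Matrix.vecMulVec_apply, Matrix.sub_apply, Matrix.add_apply]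
    ring
  rw [my_eval_charpoly, my_eval_charpoly, hsplit, Matrix.det_add_mul _ _ hdet]
  congr 1
  rw [Matrix.det_unique, Matrix.mul_assoc, ← Matrix.replicateCol_mulVec]
  simp [Matrix.add_apply, Matrix.replicateRow_mul_replicateCol_apply, Matrix.mulVec_smul, sub_eq_add_neg,
    Matrix.mulVec_neg, mul_comm]

/-- If p_{uv} has degree l - 1 (l = deg of the minimal polynomial m of A) and no common
root with m, then for every τ ≠ 0 the matrix A + τ u vᵀ has exactly l eigenvalues,
counted with algebraic multiplicity, that are not eigenvalues of A, and these are
precisely the roots of m - τ p_{uv}. -/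
theorem stmt_11 (n : ℕ) (A : Matrix (Fin n) (Fin n) ℂ) (u v : Fin n → ℂ)
    (p : Polynomial ℂ)
    (hp : ∀ z : ℂ, z ∉ spectrum ℂ A →
      p.eval z = (minpoly ℂ A).eval z *
        (v ⬝ᵥ ((z • (1 : Matrix (Fin n) (Fin n) ℂ) - A)⁻¹ *ᵥ u)))
    (hpdeg : p.natDegree = (minpoly ℂ A).natDegree - 1)
    (hcommon : ∀ z : ℂ, ¬(p.IsRoot z ∧ (minpoly ℂ A).IsRoot z))
    (τ : ℂ) (hτ : τ ≠ 0) :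
    Multiset.card (Multiset.filter (fun z => z ∉ spectrum ℂ A)
        (A + τ • Matrix.vecMulVec u v).charpoly.roots) = (minpoly ℂ A).natDegree ∧
      Multiset.filter (fun z => z ∉ spectrum ℂ A)
          (A + τ • Matrix.vecMulVec u v).charpoly.roots =
        (minpoly ℂ A - C τ * p).roots := by
  set m : Polynomial ℂ := minpoly ℂ A with hm
  set B : Matrix (Fin n) (Fin n) ℂ := A + τ • Matrix.vecMulVec u v with hB
  set r : Polynomial ℂ := m - C τ * p with hr
  have hint : IsIntegral ℂ A := Algebra.IsIntegral.isIntegral A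
  have hm_monic : m.Monic := minpoly.monic hint
  have hm0 : m ≠ 0 := hm_monic.ne_zero
  have hq_monic : B.charpoly.Monic := Matrix.charpoly_monic B
  have hq0_monic : A.charpoly.Monic := Matrix.charpoly_monic A
  have hspec_fin : (spectrum ℂ A).Finite := Matrix.finite_spectrum A
  -- key polynomial identity
  have hkey : B.charpoly * m = A.charpoly * r := by
    apply Polynomial.eq_of_infinite_eval_eq
    apply Set.Infinite.mono (s := (spectrum ℂ A)ᶜ)
    · intro z hz
      have hz' : z ∉ spectrum ℂ A := hz
      simp only [Set.mem_setOf_eq, eval_mul, hB, my_det_step A u v τ z hz', hr, eval_sub,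
        eval_mul, eval_C, hp z hz']
      ring
    · exact Set.Finite.infinite_compl hspec_fin
  -- r is nonzero of degree l
  have hrdeg : r ≠ 0 ∧ r.natDegree = m.natDegree := by
    by_cases hl : m.natDegree = 0
    · have hm1 : m = 1 := hm_monic.natDegree_eq_zero.mp hl
      have hkey' : B.charpoly = A.charpoly * r := by
        simpa [hm1] using hkey
      have hr0 : r ≠ 0 := by
        intro h
        exact hq_monic.ne_zero (by simp [hkey', h])
      refine ⟨hr0, ?_⟩
      have hnd : B.charpoly.natDegree = A.charpoly.natDegree + r.natDegree := by
        rw [hkey', Polynomial.natDegree_mul hq0_monic.ne_zero hr0]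
      rw [Matrix.charpoly_natDegree_eq_dim, Matrix.charpoly_natDegree_eq_dim] at hnd
      omega
    · have hCp : (C τ * p).natDegree < m.natDegree := by
        rw [Polynomial.natDegree_C_mul hτ, hpdeg]
        omega
      have h2 := Polynomial.natDegree_sub_eq_left_of_natDegree_lt hCp
      refine ⟨fun h => ?_, h2⟩
      rw [← hr, h, Polynomial.natDegree_zero] at h2
      exact hl h2.symm
  -- roots of r avoid the spectrum
  have hr_spec : ∀ z ∈ r.roots, z ∉ spectrum ℂ A := by
    intro z hz hzspec
    have hmz : m.IsRoot z := (my_spec_iff_minpoly A z).mp hzspec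
    have hrz : r.IsRoot z := (Polynomial.mem_roots hrdeg.1).mp hz
    have hpz : p.IsRoot z := by
      have := hrz
      simp only [hr, IsRoot, eval_sub, eval_mul, eval_C, hmz.eq_zero, zero_sub,
        neg_eq_zero, mul_eq_zero] at this
      exact this.resolve_left hτ
    exact hcommon z ⟨hpz, hmz⟩
  -- roots identity
  have hroots : B.charpoly.roots + m.roots = A.charpoly.roots + r.roots := by
    rw [← Polynomial.roots_mul (mul_ne_zero hq_monic.ne_zero hm0), hkey,
      Polynomial.roots_mul (mul_ne_zero hq0_monic.ne_zero hrdeg.1)]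
  have hfilt := congrArg (Multiset.filter (fun z => z ∉ spectrum ℂ A)) hroots
  rw [Multiset.filter_add, Multiset.filter_add] at hfilt
  have h1 : Multiset.filter (fun z => z ∉ spectrum ℂ A) m.roots = 0 := by
    rw [Multiset.filter_eq_nil]
    intro z hz
    simp only [not_not]
    exact (my_spec_iff_minpoly A z).mpr ((Polynomial.mem_roots hm0).mp hz)
  have h2 : Multiset.filter (fun z => z ∉ spectrum ℂ A) A.charpoly.roots = 0 := by
    rw [Multiset.filter_eq_nil]
    intro z hz
    simp only [not_not]
    exact (my_spec_iff_charpoly A z).mpr ((Polynomial.mem_roots hq0_monic.ne_zero).mp hz)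
  have h3 : Multiset.filter (fun z => z ∉ spectrum ℂ A) r.roots = r.roots :=
    Multiset.filter_eq_self.mpr hr_spec
  rw [h1, h2, h3, add_zero, zero_add] at hfilt
  refine ⟨?_, hfilt⟩
  rw [hfilt]
  have hsplit := (Polynomial.splits_iff_card_roots.mp
    (IsAlgClosed.splits r))
  rw [hsplit, hrdeg.2]
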